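/- A compartmental matrix A (nonnegative with all column sums at most 1) is Schur stable (spectral radius strictly less than 1) if and only if every node of D(A) is outflow-connected, i.e., from every node there is a directed path to a node i with ∑_j A_{ji} < 1. -/

import Mathlib

open Matrix Finset
open scoped NNReal ENNReal

attribute [local instance] Matrix.linftyOpNormedRing Matrix.linftyOpNormedAlgebra

instance matCompleteSpace (n : ℕ) : CompleteSpace (Matrix (Fin n) (Fin n) ℂ) :=
  by infer_instance

section Aux

variable {n : ℕ}

private lemma sum_mul_apply (M N : Matrix (Fin n) (Fin n) ℝ) (j : Fin n) :
    ∑ i, (M * N) i j = ∑ k, (∑ i, M i k) * N k j := by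
  simp_rw [Matrix.mul_apply]
  rw [Finset.sum_comm]
  simp_rw [Finset.sum_mul]

variable (A : Matrix (Fin n) (Fin n) ℝ)

private lemma pow_entry_nonneg (hA : ∀ i j, 0 ≤ A i j) :
    ∀ m i j, 0 ≤ (A ^ m) i j := by
  intro m
  induction m with
  | zero => intro i j; simp [Matrix.one_apply]; positivity
  | succ m ih =>
      intro i j
      rw [pow_succ, Matrix.mul_apply]
      exact Finset.sum_nonneg fun k _ => mul_nonneg (ih i k) (hA k j)

private lemma csum_succ (m : ℕ) (j : Fin n) :
    ∑ i, (A ^ (m + 1)) i j = ∑ k, (∑ i, A i k) * (A ^ m) k j := by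
  rw [pow_succ']
  exact sum_mul_apply A (A ^ m) j

private lemma csum_anti (hA : ∀ i j, 0 ≤ A i j) (hcol : ∀ j, ∑ i, A i j ≤ 1) :
    ∀ {m m' : ℕ}, m ≤ m' → ∀ j, ∑ i, (A ^ m') i j ≤ ∑ i, (A ^ m) i j := by
  have hstep : ∀ m j, ∑ i, (A ^ (m + 1)) i j ≤ ∑ i, (A ^ m) i j := by
    intro m j
    rw [csum_succ]
    refine Finset.sum_le_sum fun k _ => ?_
    exact mul_le_of_le_one_left (pow_entry_nonneg A hA m k j) (hcol k)
  intro m m' h j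
  induction h with
  | refl => exact le_rfl
  | step h ih => exact le_trans (hstep _ j) ih
  
private lemma csum_zero (j : Fin n) : ∑ i, ((1 : Matrix (Fin n) (Fin n) ℝ)) i j = 1 := by
  simp [Matrix.one_apply]

private lemma csum_le_one (hA : ∀ i j, 0 ≤ A i j) (hcol : ∀ j, ∑ i, A i j ≤ 1)
    (m : ℕ) (j : Fin n) : ∑ i, (A ^ m) i j ≤ 1 := by
  have := csum_anti A hA hcol (Nat.zero_le m) j
  simpa [csum_zero] using this

private lemma exists_pow_pos (hA : ∀ i j, 0 ≤ A i j) {i k : Fin n}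
    (h : Relation.ReflTransGen (fun a b => 0 < A b a) i k) :
    ∃ m, 0 < (A ^ m) k i := by
  induction h with
  | refl => exact ⟨0, by simp [Matrix.one_apply]⟩
  | @tail b c hab hbc ih =>
      obtain ⟨m, hm⟩ := ih
      refine ⟨m + 1, ?_⟩
      rw [pow_succ', Matrix.mul_apply]
      exact Finset.sum_pos'
        (fun l _ => mul_nonneg (hA _ _) (pow_entry_nonneg A hA m l i))
        ⟨b, Finset.mem_univ b, mul_pos hbc hm⟩

private lemma csum_lt_one (hA : ∀ i j, 0 ≤ A i j) (hcol : ∀ j, ∑ i, A i j ≤ 1)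
    {m : ℕ} {j k : Fin n} (hk : 0 < (A ^ m) k j) (hout : ∑ l, A l k < 1) :
    ∑ i, (A ^ (m + 1)) i j < 1 := by
  have h1 : ∑ i, (A ^ (m + 1)) i j < ∑ i, (A ^ m) i j := by
    rw [csum_succ]
    refine Finset.sum_lt_sum
      (fun k' _ => mul_le_of_le_one_left (pow_entry_nonneg A hA m k' j) (hcol k'))
      ⟨k, Finset.mem_univ k, ?_⟩
    calc (∑ i, A i k) * (A ^ m) k j < 1 * (A ^ m) k j :=
          mul_lt_mul_of_pos_right hout hk
      _ = (A ^ m) k j := one_mul _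
  exact lt_of_lt_of_le h1 (csum_le_one A hA hcol m j)

private lemma csum_closed_eq_one (hA : ∀ i j, 0 ≤ A i j) {i0 : Fin n}
    (hone : ∀ k, Relation.ReflTransGen (fun a b => 0 < A b a) i0 k → ∑ l, A l k = 1) :
    ∀ m j, Relation.ReflTransGen (fun a b => 0 < A b a) i0 j → ∑ i, (A ^ m) i j = 1 := by
  intro m
  induction m with
  | zero => intro j _; simpa using csum_zero (n := n) j
  | succ m ih =>
      intro j hj
      rw [pow_succ, sum_mul_apply]
      have : ∀ k ∈ Finset.univ, (∑ i, (A ^ m) i k) * A k j = A k j := by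
        intro k _
        rcases (hA k j).eq_or_lt with h0 | hpos
        · rw [← h0, mul_zero]
        · rw [ih k (hj.tail hpos), one_mul]
      rw [Finset.sum_congr rfl this, hone j hj]

end Aux

private lemma spectrum_transpose {n : ℕ} (M : Matrix (Fin n) (Fin n) ℂ) :
    spectrum ℂ Mᵀ = spectrum ℂ M := by
  ext μ
  have h1 : (algebraMap ℂ (Matrix (Fin n) (Fin n) ℂ) μ - Mᵀ)
      = (algebraMap ℂ (Matrix (Fin n) (Fin n) ℂ) μ - M)ᵀ := by
    rw [Matrix.transpose_sub]
    congr 1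
    rw [Algebra.algebraMap_eq_smul_one, Matrix.transpose_smul, Matrix.transpose_one]
  simp only [spectrum.mem_iff, h1, Matrix.isUnit_iff_isUnit_det, Matrix.det_transpose]

/-- A compartmental matrix (nonnegative with column sums at most 1) is Schur stable
(spectral radius < 1) iff every node of its digraph is outflow-connected, i.e. from every
node there is a directed path (arc `(i,j)` iff `A j i > 0`) to an outflow node `k`
whose column sum is strictly less than 1. -/
theorem compartmental_schur_iff_outflow_connected
    {n : ℕ} (A : Matrix (Fin n) (Fin n) ℝ)
    (hA : ∀ i j, 0 ≤ A i j) (hcol : ∀ j, ∑ i, A i j ≤ 1) :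
    spectralRadius ℂ (A.map Complex.ofReal) < 1 ↔
      ∀ i : Fin n, ∃ k : Fin n,
        Relation.ReflTransGen (fun a b => 0 < A b a) i k ∧ ∑ l, A l k < 1 := by
  rcases Nat.eq_zero_or_pos n with hn | hn
  · subst hn
    constructor
    · intro _ i; exact i.elim0
    · intro _
      haveI : Subsingleton (Matrix (Fin 0) (Fin 0) ℂ) :=
        ⟨fun a b => by ext i j; exact i.elim0⟩
      have hspec : spectrum ℂ (A.map Complex.ofReal) = ∅ := by
        ext μ
        simp [spectrum.mem_iff, isUnit_of_subsingleton]
      unfold spectralRadius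
      rw [hspec]
      simp
  haveI : Nonempty (Fin n) := ⟨⟨0, hn⟩⟩
  set M := A.map Complex.ofReal with hM
  have hmap : ∀ m : ℕ, M ^ m = (A ^ m).map Complex.ofReal := by
    intro m
    induction m with
    | zero =>
        rw [pow_zero, pow_zero]
        exact (Matrix.map_one Complex.ofReal Complex.ofReal_zero Complex.ofReal_one).symm
    | succ m ih =>
        rw [pow_succ, pow_succ, ih, hM]
        exact (Matrix.map_mul (f := Complex.ofRealHom)).symm
  have hsr : spectralRadius ℂ M = spectralRadius ℂ Mᵀ := by
    unfold spectralRadius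
    rw [spectrum_transpose]
  have hBpow : ∀ m : ℕ, Mᵀ ^ m = ((A ^ m).map Complex.ofReal)ᵀ := by
    intro m
    rw [← Matrix.transpose_pow, hmap]
  have hrow : ∀ (m : ℕ) (i : Fin n),
      ((∑ j, ‖(Mᵀ ^ m) i j‖₊ : ℝ≥0) : ℝ) = ∑ j, (A ^ m) j i := by
    intro m i
    push_cast
    refine Finset.sum_congr rfl fun j _ => ?_
    rw [hBpow]
    simp only [Matrix.transpose_apply, Matrix.map_apply, coe_nnnorm, Complex.norm_real]
    exact Real.norm_of_nonneg (pow_entry_nonneg A hA m j i)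
  constructor
  · -- stable → outflow connected
    intro hlt
    by_contra hout
    push_neg at hout
    obtain ⟨i0, hi0⟩ := hout
    have hone : ∀ k, Relation.ReflTransGen (fun a b => 0 < A b a) i0 k → ∑ l, A l k = 1 :=
      fun k hk => le_antisymm (hcol k) (hi0 k hk)
    have hcs := csum_closed_eq_one A hA hone
    have hlow : ∀ m : ℕ, (1 : ℝ≥0∞) ≤ (‖Mᵀ ^ m‖₊ : ℝ≥0∞) ^ (1 / (m : ℝ)) := by
      intro m
      have h1 : (1 : ℝ≥0) ≤ ‖Mᵀ ^ m‖₊ := by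
        rw [Matrix.linfty_opNNNorm_def]
        refine le_trans ?_ (Finset.le_sup (Finset.mem_univ i0))
        rw [← NNReal.coe_le_coe, hrow m i0, hcs m i0 Relation.ReflTransGen.refl]
        norm_num
      rcases Nat.eq_zero_or_pos m with hm | hm
      · subst hm; simp
      · exact ENNReal.one_le_rpow (by exact_mod_cast h1)
          (by positivity)
    have hge : (1 : ℝ≥0∞) ≤ spectralRadius ℂ Mᵀ :=
      ge_of_tendsto' (spectrum.pow_nnnorm_pow_one_div_tendsto_nhds_spectralRadius Mᵀ) hlow
    rw [hsr] at hlt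
    exact absurd hlt (not_lt.mpr hge)
  · -- outflow connected → stable
    intro hout
    have hm : ∀ j : Fin n, ∃ m : ℕ, ∑ i, (A ^ m) i j < 1 := by
      intro j
      obtain ⟨k, hreach, hltk⟩ := hout j
      obtain ⟨m, hmk⟩ := exists_pow_pos A hA hreach
      exact ⟨m + 1, csum_lt_one A hA hcol hmk hltk⟩
    choose g hg using hm
    set K := Finset.univ.sup g with hK
    have hKlt : ∀ j, ∑ i, (A ^ (K + 1)) i j < 1 := fun j =>
      lt_of_le_of_lt
        (csum_anti A hA hcol (le_trans (Finset.le_sup (Finset.mem_univ j)) (Nat.le_succ K)) j)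
        (hg j)
    have hnormlt : ‖Mᵀ ^ (K + 1)‖₊ < 1 := by
      rw [Matrix.linfty_opNNNorm_def]
      refine (Finset.sup_lt_iff (by norm_num)).mpr fun i _ => ?_
      rw [← NNReal.coe_lt_coe, hrow (K + 1) i]
      simpa using hKlt i
    have hb := spectrum.spectralRadius_le_pow_nnnorm_pow_one_div ℂ Mᵀ K
    rw [nnnorm_one] at hb
    calc spectralRadius ℂ M = spectralRadius ℂ Mᵀ := hsr
      _ ≤ (‖Mᵀ ^ (K + 1)‖₊ : ℝ≥0∞) ^ (1 / ((K : ℝ) + 1)) * (1 : ℝ≥0∞) ^ (1 / ((K : ℝ) + 1)) := by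
          exact_mod_cast hb
      _ = (‖Mᵀ ^ (K + 1)‖₊ : ℝ≥0∞) ^ (1 / ((K : ℝ) + 1)) := by
          rw [ENNReal.one_rpow, mul_one]
      _ < 1 := ENNReal.rpow_lt_one (by exact_mod_cast hnormlt) (by positivity)
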